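/- Let k be a field, let α be a translation function, and let G : V → V' be a morphism of persistence modules over k. Then G is an α-interleaving if and only if both ker G and coker G are α-trivial; concretely: G is an α-interleaving if and only if (i) for every t ∈ [0,∞] and every v ∈ V(t) with G(t)(v) = 0, the structure map V(t ≤ α(t)) sends v to 0, and (ii) for every t ∈ [0,∞] and every v' ∈ V'(t), the element V'(t ≤ α(t))(v') lies in the image of G(α(t)). -/

import Mathlib

open CategoryTheory
open scoped ENNReal

/-- A morphism `G : V ⟶ V'` of persistence modules over `k` (functors from
`[0,∞]`, with its usual order, to vector spaces over `k`) is an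
`α`-interleaving if for every `t` there is a linear map
`F_t : V'(t) ⟶ V(α t)` with `F_t ∘ G(t)` and `G(α t) ∘ F_t` equal to the
respective `α`-units. -/
def IsInterleaving {k : Type} [Field k] (α : ℝ≥0∞ → ℝ≥0∞)
    (hα : ∀ t, t ≤ α t) {V V' : ℝ≥0∞ ⥤ ModuleCat k} (G : V ⟶ V') : Prop :=
  ∀ t : ℝ≥0∞, ∃ F : V'.obj t ⟶ V.obj (α t),
    G.app t ≫ F = V.map (homOfLE (hα t)) ∧
    F ≫ G.app (α t) = V'.map (homOfLE (hα t))

/-- Key linear-algebra lemma: given `g : W → W'`, `u : W → X`, `gα : X → X'`,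
`u' : W' → X'` with `gα ∘ u = u' ∘ g`, if `ker g ⊆ ker u` and
`range u' ⊆ range gα`, then there is `F : W' → X` with `F ∘ g = u` and
`gα ∘ F = u'`. -/
theorem exists_filler {k : Type} {W W' X X' : Type*} [Field k]
    [AddCommGroup W] [Module k W] [AddCommGroup W'] [Module k W']
    [AddCommGroup X] [Module k X] [AddCommGroup X'] [Module k X']
    (g : W →ₗ[k] W') (u : W →ₗ[k] X) (gα : X →ₗ[k] X') (u' : W' →ₗ[k] X')
    (hnat : ∀ w, gα (u w) = u' (g w))
    (h1 : ∀ w, g w = 0 → u w = 0)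
    (h2 : ∀ w', ∃ x, gα x = u' w') :
    ∃ F : W' →ₗ[k] X, (∀ w, F (g w) = u w) ∧ (∀ w', gα (F w') = u' w') := by
  obtain ⟨q, hq⟩ := Submodule.exists_isCompl (LinearMap.range g)
  -- section of gα onto its range
  obtain ⟨s, hs⟩ := LinearMap.exists_rightInverse_of_surjective
    (gα.rangeRestrict) (LinearMap.range_rangeRestrict gα)
  have hker : LinearMap.ker g ≤ LinearMap.ker u := fun w hw => by
    exact LinearMap.mem_ker.2 (h1 w (LinearMap.mem_ker.1 hw))
  -- F₁ on the range of g
  let F₁ : LinearMap.range g →ₗ[k] X :=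
    ((LinearMap.ker g).liftQ u hker) ∘ₗ (g.quotKerEquivRange.symm : LinearMap.range g →ₗ[k] W ⧸ LinearMap.ker g)
  have hF₁ : ∀ w : W, F₁ ⟨g w, LinearMap.mem_range_self g w⟩ = u w := by
    intro w
    simp only [F₁, LinearMap.comp_apply, LinearEquiv.coe_coe]
    rw [g.quotKerEquivRange_symm_apply_image w (LinearMap.mem_range_self g w)]
    simp
  have hgF₁ : ∀ p : LinearMap.range g, gα (F₁ p) = u' p := by
    rintro ⟨-, w, rfl⟩
    rw [hF₁ w]
    exact hnat w
  -- F₂ on all of W', used on the complement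
  let F₂ : W' →ₗ[k] X :=
    s ∘ₗ (u'.codRestrict (LinearMap.range gα) (fun w' => by
      obtain ⟨x, hx⟩ := h2 w'; exact ⟨x, hx⟩))
  have hgF₂ : ∀ w', gα (F₂ w') = u' w' := by
    intro w'
    have := congrArg (fun f => (f ((u'.codRestrict (LinearMap.range gα) (fun w' => by
      obtain ⟨x, hx⟩ := h2 w'; exact ⟨x, hx⟩)) w') : X')) hs
    simpa [F₂, LinearMap.comp_apply] using this
  refine ⟨F₁ ∘ₗ (LinearMap.range g).projectionOnto q hq
      + F₂ ∘ₗ q.subtype ∘ₗ q.projectionOnto _ hq.symm, ?_, ?_⟩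
  · intro w
    have hp : (LinearMap.range g).projectionOnto q hq (g w)
        = ⟨g w, LinearMap.mem_range_self g w⟩ :=
      Submodule.projectionOnto_apply_left hq ⟨g w, LinearMap.mem_range_self g w⟩
    have hq0 : q.projectionOnto _ hq.symm (g w) = 0 :=
      (Submodule.projectionOnto_apply_eq_zero_iff hq.symm).2 (LinearMap.mem_range_self g w)
    simp [LinearMap.add_apply, LinearMap.comp_apply, hp, hq0, hF₁]
  · intro w'
    have hdec : ((LinearMap.range g).projectionOnto q hq w' : W') + (q.projectionOnto _ hq.symm w' : W') = w' := Submodule.projection_add_projection_eq_self hq w'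
    simp only [LinearMap.add_apply, LinearMap.comp_apply, map_add, hgF₁, hgF₂,
      Submodule.coe_subtype]
    rw [← map_add, hdec]

/-- `G` is an `α`-interleaving if and only if `ker G` and
`coker G` are `α`-trivial, i.e. (i) every element of a pointwise kernel is
killed by the `α`-unit, and (ii) the `α`-unit of every element of `V'(t)`
lies in the image of `G(α t)`. -/
theorem isInterleaving_iff_ker_coker {k : Type} [Field k]
    (α : ℝ≥0∞ → ℝ≥0∞) (hmono : Monotone α) (hα : ∀ t, t ≤ α t)
    {V V' : ℝ≥0∞ ⥤ ModuleCat k} (G : V ⟶ V') :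
    IsInterleaving α hα G ↔
      ((∀ (t : ℝ≥0∞) (v : V.obj t), G.app t v = 0 →
          V.map (homOfLE (hα t)) v = 0) ∧
        (∀ (t : ℝ≥0∞) (v' : V'.obj t), ∃ v : V.obj (α t),
          G.app (α t) v = V'.map (homOfLE (hα t)) v')) := by
  constructor
  · intro h
    constructor
    · intro t v hv
      obtain ⟨F, hF1, hF2⟩ := h t
      have h := ConcreteCategory.congr_hom hF1 v
      have h' : F (G.app t v) = V.map (homOfLE (hα t)) v := h
      rw [← h', hv, map_zero]
    · intro t v'
      obtain ⟨F, hF1, hF2⟩ := h t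
      refine ⟨F v', ?_⟩
      exact ConcreteCategory.congr_hom hF2 v'
  · rintro ⟨h1, h2⟩ t
    have hnat := G.naturality (homOfLE (hα t))
    have hnat' : ∀ w : V.obj t, G.app (α t) (V.map (homOfLE (hα t)) w)
        = V'.map (homOfLE (hα t)) (G.app t w) := by
      intro w
      exact ConcreteCategory.congr_hom hnat w
    obtain ⟨F, hFg, hgF⟩ := exists_filler (k := k) (G.app t).hom (V.map (homOfLE (hα t))).hom
      (G.app (α t)).hom (V'.map (homOfLE (hα t))).hom hnat' (h1 t) (fun w' => by
        obtain ⟨v, hv⟩ := h2 t w'; exact ⟨v, hv⟩)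
    exact ⟨ModuleCat.ofHom F, ModuleCat.hom_ext (LinearMap.ext hFg), ModuleCat.hom_ext (LinearMap.ext hgF)⟩
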